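/- In the likelihood-ratio filtration setup, suppose that for all 1 ≤ t < k ≤ T one has, almost surely, E[ r_k (ρ_{t+1:T})² | ℱ_t ] ≥ E[ r_k ρ_{t+1:T} | ℱ_t ], where ρ_{t+1:T} := ∏_{j=t+1}^T ρ_j (since E[ρ_{t+1:T} | ℱ_t] = 1, this says that conditionally on ℱ_t the variables ρ_{t+1:T} and r_k ρ_{t+1:T} are nonnegatively correlated). Then Var( ∑_{t=1}^T γ^{t−1} ρ_{1:t} r_t ) ≤ Var( ρ_{1:T} ∑_{t=1}^T γ^{t−1} r_t ); that is, the per-decision importance-sampling estimator has variance no larger than the crude importance-sampling estimator. -/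

import Mathlib

open MeasureTheory Finset

lemma aux_int_mul_L2 {Ω : Type*} {m0 : MeasurableSpace Ω} {P : Measure Ω} {f g : Ω → ℝ}
    (hf : MemLp f 2 P) (hg : MemLp g 2 P) : Integrable (fun ω => f ω * g ω) P := by
  have h1 := hf.integrable_sq
  have h2 := hg.integrable_sq
  refine Integrable.mono' ((h1.add h2).div_const 2)
    (hf.aestronglyMeasurable.mul hg.aestronglyMeasurable)
    (Filter.Eventually.of_forall fun ω => ?_)
  simp only [Pi.add_apply]
  rw [Real.norm_eq_abs, abs_mul]
  nlinarith [sq_abs (f ω), sq_abs (g ω), sq_nonneg (|f ω| - |g ω|), abs_nonneg (f ω),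
    abs_nonneg (g ω)]

/-- In the likelihood-ratio filtration setup, if for all `1 ≤ t < k ≤ T`,
a.s. `E[r_k (ρ_{t+1:T})² | ℱ_t] ≥ E[r_k ρ_{t+1:T} | ℱ_t]` (conditional nonnegative
correlation of `ρ_{t+1:T}` and `r_k ρ_{t+1:T}`), then the per-decision estimator has
variance no larger than the crude importance-sampling estimator, with
`Var(X) := E[X²] − (E[X])²`. -/
theorem pdis_variance_le_is_variance
    {Ω : Type*} {m0 : MeasurableSpace Ω} (P : Measure Ω) [IsProbabilityMeasure P]
    (T : ℕ) (ℱ : MeasureTheory.Filtration ℕ m0)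
    (γ : ℝ) (hγ : γ ∈ Set.Ioc (0 : ℝ) 1)
    (ρ : ℕ → Ω → ℝ)
    (hρ_meas : ∀ t, 1 ≤ t → t ≤ T → Measurable[ℱ t] (ρ t))
    (hρ_nonneg : ∀ t ω, 0 ≤ ρ t ω)
    (hρ_int : ∀ t, 1 ≤ t → t ≤ T → Integrable (ρ t) P)
    (hρ_cond : ∀ t, 1 ≤ t → t ≤ T → P[ρ t | ℱ (t - 1)] =ᵐ[P] fun _ => (1 : ℝ))
    (ρprod : ℕ → Ω → ℝ)
    (hρprod : ∀ t ω, ρprod t ω = ∏ k ∈ Icc 1 t, ρ k ω)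
    (r : ℕ → Ω → ℝ)
    (hr_meas : ∀ t, 1 ≤ t → t ≤ T → Measurable[ℱ t] (r t))
    (hr_range : ∀ t ω, r t ω ∈ Set.Icc (0 : ℝ) 1)
    (hρprod_sq : ∀ t, 1 ≤ t → t ≤ T → MemLp (ρprod t) 2 P)
    (h_pos_corr : ∀ t k, 1 ≤ t → t < k → k ≤ T →
      ∀ᵐ ω ∂P,
        (P[fun ω' => r k ω' * ∏ j ∈ Icc (t + 1) T, ρ j ω' | ℱ t]) ω
          ≤ (P[fun ω' => r k ω' * (∏ j ∈ Icc (t + 1) T, ρ j ω') ^ 2 | ℱ t]) ω) :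
    (∫ ω, (∑ t ∈ Icc 1 T, γ ^ (t - 1) * ρprod t ω * r t ω) ^ 2 ∂P)
        - (∫ ω, ∑ t ∈ Icc 1 T, γ ^ (t - 1) * ρprod t ω * r t ω ∂P) ^ 2
      ≤ (∫ ω, (ρprod T ω * ∑ t ∈ Icc 1 T, γ ^ (t - 1) * r t ω) ^ 2 ∂P)
        - (∫ ω, ρprod T ω * ∑ t ∈ Icc 1 T, γ ^ (t - 1) * r t ω ∂P) ^ 2 := by
  have hle : ∀ s, ℱ s ≤ m0 := ℱ.le
  have hr0 : ∀ t ω, 0 ≤ r t ω := fun t ω => (hr_range t ω).1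
  have hr1 : ∀ t ω, r t ω ≤ 1 := fun t ω => (hr_range t ω).2
  -- measurability of tail products
  have measprod : ∀ a b : ℕ, b ≤ T → Measurable[ℱ b] fun ω => ∏ j ∈ Icc (a + 1) b, ρ j ω := by
    intro a b hbT
    refine Finset.measurable_prod _ fun j hj => ?_
    simp only [mem_Icc] at hj
    exact (hρ_meas j (le_trans (Nat.le_add_left 1 a) hj.1) (hj.2.trans hbT)).mono
      (ℱ.mono hj.2) le_rfl
  have measρprod : ∀ b : ℕ, b ≤ T → Measurable[ℱ b] (ρprod b) := by
    intro b hbT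
    have h : ρprod b = fun ω => ∏ j ∈ Icc (0 + 1) b, ρ j ω := funext fun ω => by
      simpa using hρprod b ω
    rw [h]; exact measprod 0 b hbT
  have hρp0 : ∀ t ω, 0 ≤ ρprod t ω := fun t ω => by
    rw [hρprod]; exact Finset.prod_nonneg fun j _ => hρ_nonneg j ω
  -- splitting products
  have split : ∀ t s : ℕ, t ≤ s → ∀ ω, ρprod t ω * ∏ j ∈ Icc (t + 1) s, ρ j ω = ρprod s ω := by
    intro t s hts ω
    rw [hρprod, hρprod]
    rw [show (1 : ℕ) = 0 + 1 from rfl, Finset.Icc_add_one_left_eq_Ioc 0 t, Finset.Icc_add_one_left_eq_Ioc 0 s,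
      show Icc (t + (0 + 1)) s = Ioc t s from Finset.Icc_add_one_left_eq_Ioc t s]
    exact Finset.prod_Ioc_consecutive _ (Nat.zero_le t) hts
  -- one-step lemma
  have key1 : ∀ (s : ℕ) (h : Ω → ℝ), s < T → Measurable[ℱ s] h → Integrable h P →
      Integrable (fun ω => h ω * ρ (s + 1) ω) P →
      ∫ ω, h ω * ρ (s + 1) ω ∂P = ∫ ω, h ω ∂P := by
    intro s h hsT hmeas hint hint2
    have hc : P[ρ (s + 1) | ℱ s] =ᵐ[P] fun _ => (1 : ℝ) := by
      have := hρ_cond (s + 1) (Nat.le_add_left 1 s) (by omega)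
      simpa using this
    have hmul : P[(fun ω => h ω * ρ (s + 1) ω) | ℱ s]
        =ᵐ[P] h * P[ρ (s + 1) | ℱ s] :=
      condExp_mul_of_stronglyMeasurable_left hmeas.stronglyMeasurable hint2
        (hρ_int (s + 1) (Nat.le_add_left 1 s) (by omega))
    calc ∫ ω, h ω * ρ (s + 1) ω ∂P
        = ∫ ω, (P[(fun ω => h ω * ρ (s + 1) ω) | ℱ s]) ω ∂P := (integral_condExp (hle s)).symm
      _ = ∫ ω, h ω ∂P := by
          refine integral_congr_ae (hmul.trans ?_)
          filter_upwards [hc] with ω hω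
          simp only [Pi.mul_apply, hω, mul_one]
  -- chain lemma
  have chain : ∀ (b : ℕ) (h : Ω → ℝ), Measurable[ℱ b] h →
      (∀ s, b ≤ s → s ≤ T → Integrable (fun ω => h ω * ∏ j ∈ Icc (b + 1) s, ρ j ω) P) →
      ∀ s, b ≤ s → s ≤ T →
      ∫ ω, h ω * ∏ j ∈ Icc (b + 1) s, ρ j ω ∂P = ∫ ω, h ω ∂P := by
    intro b h hmeas hint s hbs
    induction s, hbs using Nat.le_induction with
    | base =>
      intro _
      have hempty : Icc (b + 1) b = (∅ : Finset ℕ) := Finset.Icc_eq_empty (by omega)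
      simp only [hempty, Finset.prod_empty, mul_one]
    | succ s hbs ih =>
      intro hsT
      have hprod : ∀ ω, ∏ j ∈ Icc (b + 1) (s + 1), ρ j ω
          = (∏ j ∈ Icc (b + 1) s, ρ j ω) * ρ (s + 1) ω :=
        fun ω => Finset.prod_Icc_succ_top (by omega) _
      have hmeas' : Measurable[ℱ s] fun ω => h ω * ∏ j ∈ Icc (b + 1) s, ρ j ω :=
        (hmeas.mono (ℱ.mono hbs) le_rfl).mul (measprod b s (by omega))
      have hint2 : Integrable (fun ω => (h ω * ∏ j ∈ Icc (b + 1) s, ρ j ω) * ρ (s + 1) ω) P :=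
        (hint (s + 1) (by omega) hsT).congr
          (Filter.Eventually.of_forall fun ω => by beta_reduce; rw [hprod ω, mul_assoc])
      have e1 : ∫ ω, h ω * ∏ j ∈ Icc (b + 1) (s + 1), ρ j ω ∂P
          = ∫ ω, (h ω * ∏ j ∈ Icc (b + 1) s, ρ j ω) * ρ (s + 1) ω ∂P :=
        integral_congr_ae (Filter.Eventually.of_forall fun ω => by beta_reduce; rw [hprod ω, mul_assoc])
      rw [e1, key1 s _ (by omega) hmeas' (hint s hbs (by omega)) hint2]
      exact ih (by omega)
  -- integrability and unit mass of tail products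
  have tail : ∀ t s : ℕ, t ≤ s → s ≤ T →
      Integrable (fun ω => ∏ j ∈ Icc (t + 1) s, ρ j ω) P ∧
        ∫ ω, ∏ j ∈ Icc (t + 1) s, ρ j ω ∂P = 1 := by
    intro t s hts
    induction s, hts using Nat.le_induction with
    | base =>
      intro _
      have hempty : Icc (t + 1) t = (∅ : Finset ℕ) := Finset.Icc_eq_empty (by omega)
      simp only [hempty, Finset.prod_empty]
      exact ⟨integrable_const 1, by simp⟩
    | succ s hts ih =>
      intro hsT
      obtain ⟨hGint, hGval⟩ := ih (by omega)
      set G := fun ω => ∏ j ∈ Icc (t + 1) s, ρ j ω with hG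
      have hGmeas0 : Measurable[ℱ s] G := measprod t s (by omega)
      have hGmeas : Measurable G := hGmeas0.mono (hle s) le_rfl
      have hGnonneg : ∀ ω, 0 ≤ G ω := fun ω => Finset.prod_nonneg fun j _ => hρ_nonneg j ω
      have hρs0 : ∀ ω, 0 ≤ ρ (s + 1) ω := fun ω => hρ_nonneg _ ω
      have hρsmeas : Measurable (ρ (s + 1)) :=
        (hρ_meas (s + 1) (by omega) hsT).mono (hle (s + 1)) le_rfl
      have hminmeas : ∀ n : ℕ, Measurable[ℱ s] fun ω => min (G ω) n :=
        fun n => hGmeas0.min measurable_const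
      have hminint : ∀ n : ℕ, Integrable (fun ω => min (G ω) (n : ℝ)) P := by
        intro n
        refine Integrable.mono' (integrable_const (n : ℝ))
          ((hminmeas n).mono (hle s) le_rfl).aestronglyMeasurable
          (Filter.Eventually.of_forall fun ω => ?_)
        rw [Real.norm_eq_abs, abs_of_nonneg (le_min (hGnonneg ω) (Nat.cast_nonneg n))]
        exact min_le_right _ _
      have hminρint : ∀ n : ℕ, Integrable (fun ω => min (G ω) (n : ℝ) * ρ (s + 1) ω) P := by
        intro n
        exact (hρ_int (s + 1) (by omega) hsT).bdd_mul
          ((hminmeas n).mono (hle s) le_rfl).aestronglyMeasurable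
          (c := (n : ℝ)) (Filter.Eventually.of_forall fun ω => by
            rw [Real.norm_eq_abs, abs_of_nonneg (le_min (hGnonneg ω) (Nat.cast_nonneg n))]
            exact min_le_right _ _)
      have hstep : ∀ n : ℕ, ∫ ω, min (G ω) (n : ℝ) * ρ (s + 1) ω ∂P
          = ∫ ω, min (G ω) (n : ℝ) ∂P :=
        fun n => key1 s _ (by omega) (hminmeas n) (hminint n) (hminρint n)
      have hle1 : ∀ n : ℕ, ∫ ω, min (G ω) (n : ℝ) ∂P ≤ 1 := by
        intro n
        rw [← hGval]
        exact integral_mono (hminint n) hGint fun ω => min_le_left _ _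
      have hlin : ∫⁻ ω, ENNReal.ofReal (G ω * ρ (s + 1) ω) ∂P ≤ 1 := by
        have hmono : Monotone fun (n : ℕ) (ω : Ω) =>
            ENNReal.ofReal (min (G ω) (n : ℝ) * ρ (s + 1) ω) := by
          intro m n hmn
          intro ω
          exact ENNReal.ofReal_le_ofReal (mul_le_mul_of_nonneg_right
            (min_le_min le_rfl (Nat.cast_le.2 hmn)) (hρs0 ω))
        have hmeasn : ∀ n : ℕ, Measurable fun ω =>
            ENNReal.ofReal (min (G ω) (n : ℝ) * ρ (s + 1) ω) :=
          fun n => ((hGmeas.min measurable_const).mul hρsmeas).ennreal_ofReal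
        have hsup : ∀ ω, (⨆ n : ℕ, ENNReal.ofReal (min (G ω) (n : ℝ) * ρ (s + 1) ω))
            = ENNReal.ofReal (G ω * ρ (s + 1) ω) := by
          intro ω
          apply le_antisymm
          · exact iSup_le fun n => ENNReal.ofReal_le_ofReal
              (mul_le_mul_of_nonneg_right (min_le_left _ _) (hρs0 ω))
          · refine le_trans (le_of_eq ?_) (le_iSup _ ⌈G ω⌉₊)
            rw [min_eq_left (Nat.le_ceil _)]
        calc ∫⁻ ω, ENNReal.ofReal (G ω * ρ (s + 1) ω) ∂P
            = ⨆ n : ℕ, ∫⁻ ω, ENNReal.ofReal (min (G ω) (n : ℝ) * ρ (s + 1) ω) ∂P := by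
              rw [← lintegral_iSup hmeasn hmono]
              exact lintegral_congr fun ω => (hsup ω).symm
          _ ≤ 1 := by
              refine iSup_le fun n => ?_
              rw [← ofReal_integral_eq_lintegral_ofReal (hminρint n)
                (Filter.Eventually.of_forall fun ω =>
                  mul_nonneg (le_min (hGnonneg ω) (Nat.cast_nonneg n)) (hρs0 ω))]
              rw [hstep n]
              exact ENNReal.ofReal_le_one.2 (hle1 n)
      have hint' : Integrable (fun ω => G ω * ρ (s + 1) ω) P := by
        constructor
        · exact (hGmeas.mul hρsmeas).aestronglyMeasurable
        · rw [hasFiniteIntegral_iff_ofReal (Filter.Eventually.of_forall fun ω =>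
            mul_nonneg (hGnonneg ω) (hρs0 ω))]
          exact lt_of_le_of_lt hlin (by norm_num)
      have hexp : ∀ ω, ∏ j ∈ Icc (t + 1) (s + 1), ρ j ω = G ω * ρ (s + 1) ω :=
        fun ω => Finset.prod_Icc_succ_top (by omega) _
      constructor
      · exact hint'.congr (Filter.Eventually.of_forall fun ω => (hexp ω).symm)
      · rw [integral_congr_ae (Filter.Eventually.of_forall hexp),
          key1 s G (by omega) hGmeas0 hGint hint']
        exact hGval
  -- L² facts
  have hL2 : ∀ c, c ≤ T → MemLp (ρprod c) 2 P := by
    intro c hc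
    rcases Nat.eq_zero_or_pos c with h0 | h1
    · subst h0
      have h : ρprod 0 = fun _ => (1 : ℝ) := funext fun ω => by rw [hρprod]; simp
      rw [h]; exact memLp_const 1
    · exact hρprod_sq c h1 hc
  -- master integrability
  have key6 : ∀ a b : ℕ, a ≤ T → b ≤ T → ∀ u : Ω → ℝ, AEStronglyMeasurable u P →
      (∀ ω, |u ω| ≤ 1) → Integrable (fun ω => ρprod a ω * ρprod b ω * u ω) P := by
    intro a b haT hbT u hum hub
    have hmm : Integrable (fun ω => ρprod a ω * ρprod b ω) P :=
      aux_int_mul_L2 (hL2 a haT) (hL2 b hbT)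
    refine Integrable.mono' hmm.abs (hmm.aestronglyMeasurable.mul hum)
      (Filter.Eventually.of_forall fun ω => ?_)
    rw [Real.norm_eq_abs, abs_mul]
    exact mul_le_of_le_one_right (abs_nonneg _) (hub ω)
  have key6' : ∀ a : ℕ, a ≤ T → ∀ u : Ω → ℝ, AEStronglyMeasurable u P →
      (∀ ω, |u ω| ≤ 1) → Integrable (fun ω => ρprod a ω * u ω) P := by
    intro a haT u hum hub
    have h0 : ρprod 0 = fun _ => (1 : ℝ) := funext fun ω => by rw [hρprod]; simp
    refine (key6 0 a (Nat.zero_le T) haT u hum hub).congr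
      (Filter.Eventually.of_forall fun ω => ?_)
    rw [h0]; ring
  have hrm : ∀ t, 1 ≤ t → t ≤ T → AEStronglyMeasurable (r t) P :=
    fun t h1 h2 => ((hr_meas t h1 h2).mono (hle t) le_rfl).aestronglyMeasurable
  have hrabs : ∀ t ω, |r t ω| ≤ 1 := fun t ω => by
    rw [abs_of_nonneg (hr0 t ω)]; exact hr1 t ω
  have hrrm : ∀ t k, 1 ≤ t → t ≤ T → 1 ≤ k → k ≤ T →
      AEStronglyMeasurable (fun ω => r t ω * r k ω) P :=
    fun t k h1 h2 h3 h4 => (hrm t h1 h2).mul (hrm k h3 h4)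
  have hrrabs : ∀ t k ω, |r t ω * r k ω| ≤ 1 := fun t k ω => by
    rw [abs_mul]
    exact mul_le_one₀ (hrabs t ω) (abs_nonneg _) (hrabs k ω)
  -- mean equality
  have meanEq : ∀ t, 1 ≤ t → t ≤ T →
      ∫ ω, ρprod t ω * r t ω ∂P = ∫ ω, ρprod T ω * r t ω ∂P := by
    intro t h1 h2
    have hh : Measurable[ℱ t] fun ω => ρprod t ω * r t ω :=
      (measρprod t h2).mul (hr_meas t h1 h2)
    have hintall : ∀ s, t ≤ s → s ≤ T →
        Integrable (fun ω => (ρprod t ω * r t ω) * ∏ j ∈ Icc (t + 1) s, ρ j ω) P := by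
      intro s hts hsT
      refine (key6' s hsT (r t) (hrm t h1 h2) (hrabs t)).congr
        (Filter.Eventually.of_forall fun ω => ?_)
      beta_reduce
      rw [← split t s hts ω]; ring
    have hc := chain t _ hh hintall T h2 le_rfl
    rw [← hc]
    exact integral_congr_ae (Filter.Eventually.of_forall fun ω => by
      beta_reduce; rw [← split t T h2 ω]; ring)
  -- common chain step for pairs
  have chainTK : ∀ t k, 1 ≤ t → t ≤ k → k ≤ T →
      ∫ ω, ρprod t ω * ρprod k ω * (r t ω * r k ω) ∂P
        = ∫ ω, ρprod t ω * ρprod T ω * (r t ω * r k ω) ∂P := by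
    intro t k h1t htk hkT
    have h1k : 1 ≤ k := le_trans h1t htk
    have htT : t ≤ T := le_trans htk hkT
    have hh : Measurable[ℱ k] fun ω => ρprod t ω * ρprod k ω * (r t ω * r k ω) :=
      (((measρprod t htT).mono (ℱ.mono htk) le_rfl).mul (measρprod k hkT)).mul
        (((hr_meas t h1t htT).mono (ℱ.mono htk) le_rfl).mul (hr_meas k h1k hkT))
    have hintall : ∀ s, k ≤ s → s ≤ T →
        Integrable (fun ω =>
          (ρprod t ω * ρprod k ω * (r t ω * r k ω)) * ∏ j ∈ Icc (k + 1) s, ρ j ω) P := by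
      intro s hks hsT
      refine (key6 t s htT hsT _ (hrrm t k h1t htT h1k hkT) (hrrabs t k)).congr
        (Filter.Eventually.of_forall fun ω => ?_)
      beta_reduce
      rw [← split k s hks ω]; ring
    have hc := chain k _ hh hintall T hkT le_rfl
    rw [← hc]
    exact integral_congr_ae (Filter.Eventually.of_forall fun ω => by
      beta_reduce; rw [← split k T hkT ω]; ring)
  -- pull-out equality
  have key4 : ∀ (t : ℕ) (w f : Ω → ℝ), Measurable[ℱ t] w → Integrable f P →
      Integrable (fun ω => w ω * f ω) P →
      Integrable (fun ω => w ω * (P[f | ℱ t]) ω) P ∧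
        ∫ ω, w ω * f ω ∂P = ∫ ω, w ω * (P[f | ℱ t]) ω ∂P := by
    intro t w f hw hf hwf
    have hmul : P[(fun ω => w ω * f ω) | ℱ t] =ᵐ[P] fun ω => w ω * (P[f | ℱ t]) ω :=
      condExp_mul_of_stronglyMeasurable_left hw.stronglyMeasurable hwf hf
    constructor
    · exact integrable_condExp.congr hmul
    · rw [← integral_condExp (hle t) (f := fun ω => w ω * f ω)]
      exact integral_congr_ae hmul
  -- pull-out inequality
  have pull : ∀ (t : ℕ) (w f₁ f₂ : Ω → ℝ), Measurable[ℱ t] w → (∀ ω, 0 ≤ w ω) →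
      Integrable f₁ P → Integrable f₂ P → Integrable (fun ω => w ω * f₁ ω) P →
      Integrable (fun ω => w ω * f₂ ω) P →
      (∀ᵐ ω ∂P, (P[f₁ | ℱ t]) ω ≤ (P[f₂ | ℱ t]) ω) →
      ∫ ω, w ω * f₁ ω ∂P ≤ ∫ ω, w ω * f₂ ω ∂P := by
    intro t w f₁ f₂ hw hw0 h1 h2 hw1 hw2 hcmp
    obtain ⟨h1i, h1e⟩ := key4 t w f₁ hw h1 hw1
    obtain ⟨h2i, h2e⟩ := key4 t w f₂ hw h2 hw2
    rw [h1e, h2e]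
    refine integral_mono_ae h1i h2i ?_
    filter_upwards [hcmp] with ω hω
    exact mul_le_mul_of_nonneg_left hω (hw0 ω)
  -- the core termwise inequality, for t ≤ k
  have core : ∀ t k, 1 ≤ t → t ≤ k → k ≤ T →
      ∫ ω, ρprod t ω * ρprod k ω * (r t ω * r k ω) ∂P
        ≤ ∫ ω, ρprod T ω ^ 2 * (r t ω * r k ω) ∂P := by
    intro t k h1t htk hkT
    have h1k : 1 ≤ k := le_trans h1t htk
    have htT : t ≤ T := le_trans htk hkT
    have E1 := chainTK t k h1t htk hkT
    have hI1 : Integrable (fun ω => ρprod t ω * ρprod T ω * (r t ω * r k ω)) P :=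
      key6 t T htT le_rfl _ (hrrm t k h1t htT h1k hkT) (hrrabs t k)
    have hI2 : Integrable (fun ω => ρprod t ω * ρprod k ω * (r t ω * r k ω)) P :=
      key6 t k htT hkT _ (hrrm t k h1t htT h1k hkT) (hrrabs t k)
    have hI3 : Integrable (fun ω => ρprod T ω ^ 2 * (r t ω * r k ω)) P :=
      (key6 T T le_rfl le_rfl _ (hrrm t k h1t htT h1k hkT) (hrrabs t k)).congr
        (Filter.Eventually.of_forall fun ω => by beta_reduce; ring)
    rcases eq_or_lt_of_le htk with rfl | htk'
    · -- diagonal case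
      have hmono : ∫ ω, 2 * (ρprod t ω * ρprod T ω * (r t ω * r t ω)) ∂P
          ≤ ∫ ω, (ρprod T ω ^ 2 * (r t ω * r t ω)
              + ρprod t ω * ρprod t ω * (r t ω * r t ω)) ∂P := by
        refine integral_mono (hI1.const_mul 2) (hI3.add hI2) fun ω => ?_
        beta_reduce
        nlinarith [sq_nonneg (ρprod T ω - ρprod t ω), mul_nonneg (hr0 t ω) (hr0 t ω)]
      rw [integral_add hI3 hI2, integral_const_mul] at hmono
      linarith [E1]
    · -- off-diagonal case
      set w := fun ω => ρprod t ω * ρprod t ω * r t ω with hw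
      set f₁ := fun ω' => r k ω' * ∏ j ∈ Icc (t + 1) T, ρ j ω' with hf₁
      set f₂ := fun ω' => r k ω' * (∏ j ∈ Icc (t + 1) T, ρ j ω') ^ 2 with hf₂
      have hwmeas : Measurable[ℱ t] w :=
        ((measρprod t htT).mul (measρprod t htT)).mul (hr_meas t h1t htT)
      have hw0 : ∀ ω, 0 ≤ w ω :=
        fun ω => mul_nonneg (mul_nonneg (hρp0 t ω) (hρp0 t ω)) (hr0 t ω)
      have hwf1 : ∀ ω, w ω * f₁ ω = ρprod t ω * ρprod T ω * (r t ω * r k ω) := by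
        intro ω
        simp only [hw, hf₁]
        rw [← split t T htT ω]; ring
      have hwf2 : ∀ ω, w ω * f₂ ω = ρprod T ω ^ 2 * (r t ω * r k ω) := by
        intro ω
        simp only [hw, hf₂]
        rw [← split t T htT ω]; ring
      have hIwf1 : Integrable (fun ω => w ω * f₁ ω) P :=
        hI1.congr (Filter.Eventually.of_forall fun ω => (hwf1 ω).symm)
      have hIwf2 : Integrable (fun ω => w ω * f₂ ω) P :=
        hI3.congr (Filter.Eventually.of_forall fun ω => (hwf2 ω).symm)
      have htail := tail t T htT le_rfl
      have hf₁int : Integrable f₁ P := by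
        refine Integrable.mono' htail.1
          ((hrm k h1k hkT).mul ((measprod t T le_rfl).mono (hle T) le_rfl).aestronglyMeasurable)
          (Filter.Eventually.of_forall fun ω => ?_)
        have hp0 : 0 ≤ ∏ j ∈ Icc (t + 1) T, ρ j ω :=
          Finset.prod_nonneg fun j _ => hρ_nonneg j ω
        rw [Real.norm_eq_abs, abs_of_nonneg (mul_nonneg (hr0 k ω) hp0)]
        exact mul_le_of_le_one_left hp0 (hr1 k ω)
      have hgoal : ∫ ω, w ω * f₁ ω ∂P ≤ ∫ ω, w ω * f₂ ω ∂P := by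
        by_cases hf₂int : Integrable f₂ P
        · exact pull t w f₁ f₂ hwmeas hw0 hf₁int hf₂int hIwf1 hIwf2
            (h_pos_corr t k h1t htk' hkT)
        · have h0 : P[f₂ | ℱ t] = 0 := condExp_of_not_integrable hf₂int
          have hle0 : P[f₁ | ℱ t] ≤ᵐ[P] 0 := by
            filter_upwards [h_pos_corr t k h1t htk' hkT] with ω hω
            rw [h0] at hω
            exact hω
          have hge0 : (0 : Ω → ℝ) ≤ᵐ[P] P[f₁ | ℱ t] :=
            condExp_nonneg (Filter.Eventually.of_forall fun ω =>
              mul_nonneg (hr0 k ω) (Finset.prod_nonneg fun j _ => hρ_nonneg j ω))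
          have heq0 : P[f₁ | ℱ t] =ᵐ[P] 0 := hle0.antisymm hge0
          obtain ⟨hi, he⟩ := key4 t w f₁ hwmeas hf₁int hIwf1
          rw [he]
          have : ∫ ω, w ω * (P[f₁ | ℱ t]) ω ∂P = 0 := by
            rw [integral_congr_ae (g := fun _ => (0 : ℝ))]
            · exact integral_zero _ _
            · filter_upwards [heq0] with ω hω
              rw [hω]
              exact mul_zero _
          rw [this]
          refine integral_nonneg fun ω => ?_
          exact mul_nonneg (hw0 ω) (mul_nonneg (hr0 k ω) (sq_nonneg _))
      calc ∫ ω, ρprod t ω * ρprod k ω * (r t ω * r k ω) ∂P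
          = ∫ ω, w ω * f₁ ω ∂P := by
            rw [E1]
            exact integral_congr_ae (Filter.Eventually.of_forall fun ω => (hwf1 ω).symm)
        _ ≤ ∫ ω, w ω * f₂ ω ∂P := hgoal
        _ = ∫ ω, ρprod T ω ^ 2 * (r t ω * r k ω) ∂P :=
            integral_congr_ae (Filter.Eventually.of_forall hwf2)
  -- symmetric version
  have core' : ∀ t ∈ Icc 1 T, ∀ k ∈ Icc 1 T,
      ∫ ω, ρprod t ω * ρprod k ω * (r t ω * r k ω) ∂P
        ≤ ∫ ω, ρprod T ω ^ 2 * (r t ω * r k ω) ∂P := by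
    intro t ht k hk
    simp only [mem_Icc] at ht hk
    rcases le_total t k with h | h
    · exact core t k ht.1 h hk.2
    · calc ∫ ω, ρprod t ω * ρprod k ω * (r t ω * r k ω) ∂P
          = ∫ ω, ρprod k ω * ρprod t ω * (r k ω * r t ω) ∂P :=
            integral_congr_ae (Filter.Eventually.of_forall fun ω => by beta_reduce; ring)
        _ ≤ ∫ ω, ρprod T ω ^ 2 * (r k ω * r t ω) ∂P := core k t hk.1 h ht.2
        _ = ∫ ω, ρprod T ω ^ 2 * (r t ω * r k ω) ∂P :=
            integral_congr_ae (Filter.Eventually.of_forall fun ω => by beta_reduce; ring)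
  -- expansions
  have hγ0 : (0 : ℝ) ≤ γ := le_of_lt hγ.1
  have hγ1 : γ ≤ 1 := hγ.2
  have hcnn : ∀ t : ℕ, 0 ≤ γ ^ (t - 1) := fun t => pow_nonneg hγ0 _
  have hc1 : ∀ t : ℕ, γ ^ (t - 1) ≤ 1 := fun t => pow_le_one₀ hγ0 hγ1
  -- integrability of the summands
  have hintA : ∀ t, 1 ≤ t → t ≤ T →
      Integrable (fun ω => γ ^ (t - 1) * ρprod t ω * r t ω) P := by
    intro t h1 h2
    exact ((key6' t h2 (r t) (hrm t h1 h2) (hrabs t)).const_mul (γ ^ (t - 1))).congr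
      (Filter.Eventually.of_forall fun ω => by beta_reduce; ring)
  have hintB : ∀ t, 1 ≤ t → t ≤ T →
      Integrable (fun ω => γ ^ (t - 1) * (ρprod T ω * r t ω)) P := by
    intro t h1 h2
    exact (key6' T le_rfl (r t) (hrm t h1 h2) (hrabs t)).const_mul (γ ^ (t - 1))
  -- first moments
  have EXeq : ∫ ω, ∑ t ∈ Icc 1 T, γ ^ (t - 1) * ρprod t ω * r t ω ∂P
      = ∑ t ∈ Icc 1 T, γ ^ (t - 1) * ∫ ω, ρprod t ω * r t ω ∂P := by
    rw [integral_finset_sum _ (fun t ht => by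
      simp only [mem_Icc] at ht; exact hintA t ht.1 ht.2)]
    refine Finset.sum_congr rfl fun t ht => ?_
    rw [← integral_const_mul]
    exact integral_congr_ae (Filter.Eventually.of_forall fun ω => by beta_reduce; ring)
  have EYeq : ∫ ω, ρprod T ω * ∑ t ∈ Icc 1 T, γ ^ (t - 1) * r t ω ∂P
      = ∑ t ∈ Icc 1 T, γ ^ (t - 1) * ∫ ω, ρprod T ω * r t ω ∂P := by
    rw [integral_congr_ae (g := fun ω => ∑ t ∈ Icc 1 T, γ ^ (t - 1) * (ρprod T ω * r t ω))
      (Filter.Eventually.of_forall fun ω => by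
        beta_reduce
        rw [Finset.mul_sum]
        exact Finset.sum_congr rfl fun t _ => by ring)]
    rw [integral_finset_sum _ (fun t ht => by
      simp only [mem_Icc] at ht; exact hintB t ht.1 ht.2)]
    exact Finset.sum_congr rfl fun t ht => integral_const_mul _ _
  have EXY : ∫ ω, ∑ t ∈ Icc 1 T, γ ^ (t - 1) * ρprod t ω * r t ω ∂P
      = ∫ ω, ρprod T ω * ∑ t ∈ Icc 1 T, γ ^ (t - 1) * r t ω ∂P := by
    rw [EXeq, EYeq]
    refine Finset.sum_congr rfl fun t ht => ?_
    simp only [mem_Icc] at ht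
    rw [meanEq t ht.1 ht.2]
  -- second moments
  have hintQ : ∀ t ∈ Icc 1 T, ∀ k ∈ Icc 1 T,
      Integrable (fun ω => γ ^ (t - 1) * γ ^ (k - 1)
        * (ρprod t ω * ρprod k ω * (r t ω * r k ω))) P := by
    intro t ht k hk
    simp only [mem_Icc] at ht hk
    exact (key6 t k ht.2 hk.2 _ (hrrm t k ht.1 ht.2 hk.1 hk.2) (hrrabs t k)).const_mul _
  have hintQ2 : ∀ t ∈ Icc 1 T, ∀ k ∈ Icc 1 T,
      Integrable (fun ω => γ ^ (t - 1) * γ ^ (k - 1)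
        * (ρprod T ω ^ 2 * (r t ω * r k ω))) P := by
    intro t ht k hk
    simp only [mem_Icc] at ht hk
    exact ((key6 T T le_rfl le_rfl _ (hrrm t k ht.1 ht.2 hk.1 hk.2) (hrrabs t k)).congr
      (Filter.Eventually.of_forall fun ω => by beta_reduce; ring)).const_mul _
  have EX2eq : ∫ ω, (∑ t ∈ Icc 1 T, γ ^ (t - 1) * ρprod t ω * r t ω) ^ 2 ∂P
      = ∑ t ∈ Icc 1 T, ∑ k ∈ Icc 1 T, γ ^ (t - 1) * γ ^ (k - 1)
          * ∫ ω, ρprod t ω * ρprod k ω * (r t ω * r k ω) ∂P := by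
    rw [integral_congr_ae (g := fun ω => ∑ t ∈ Icc 1 T, ∑ k ∈ Icc 1 T,
        γ ^ (t - 1) * γ ^ (k - 1) * (ρprod t ω * ρprod k ω * (r t ω * r k ω)))
      (Filter.Eventually.of_forall fun ω => by
        beta_reduce
        rw [sq, Finset.sum_mul_sum]
        exact Finset.sum_congr rfl fun t _ => Finset.sum_congr rfl fun k _ => by ring)]
    rw [integral_finset_sum _ (fun t ht => integrable_finset_sum _ (fun k hk => hintQ t ht k hk))]
    refine Finset.sum_congr rfl fun t ht => ?_
    rw [integral_finset_sum _ (fun k hk => hintQ t ht k hk)]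
    exact Finset.sum_congr rfl fun k hk => integral_const_mul _ _
  have EY2eq : ∫ ω, (ρprod T ω * ∑ t ∈ Icc 1 T, γ ^ (t - 1) * r t ω) ^ 2 ∂P
      = ∑ t ∈ Icc 1 T, ∑ k ∈ Icc 1 T, γ ^ (t - 1) * γ ^ (k - 1)
          * ∫ ω, ρprod T ω ^ 2 * (r t ω * r k ω) ∂P := by
    rw [integral_congr_ae (g := fun ω => ∑ t ∈ Icc 1 T, ∑ k ∈ Icc 1 T,
        γ ^ (t - 1) * γ ^ (k - 1) * (ρprod T ω ^ 2 * (r t ω * r k ω)))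
      (Filter.Eventually.of_forall fun ω => by
        beta_reduce
        rw [mul_pow, sq (∑ t ∈ Icc 1 T, γ ^ (t - 1) * r t ω), Finset.sum_mul_sum,
          Finset.mul_sum]
        refine Finset.sum_congr rfl fun t _ => ?_
        rw [Finset.mul_sum]
        exact Finset.sum_congr rfl fun k _ => by ring)]
    rw [integral_finset_sum _ (fun t ht => integrable_finset_sum _ (fun k hk => hintQ2 t ht k hk))]
    refine Finset.sum_congr rfl fun t ht => ?_
    rw [integral_finset_sum _ (fun k hk => hintQ2 t ht k hk)]
    exact Finset.sum_congr rfl fun k hk => integral_const_mul _ _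
  have EX2le : ∫ ω, (∑ t ∈ Icc 1 T, γ ^ (t - 1) * ρprod t ω * r t ω) ^ 2 ∂P
      ≤ ∫ ω, (ρprod T ω * ∑ t ∈ Icc 1 T, γ ^ (t - 1) * r t ω) ^ 2 ∂P := by
    rw [EX2eq, EY2eq]
    refine Finset.sum_le_sum fun t ht => Finset.sum_le_sum fun k hk => ?_
    exact mul_le_mul_of_nonneg_left (core' t ht k hk)
      (mul_nonneg (hcnn t) (hcnn k))
  rw [EXY]
  linarith [EX2le]
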